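/- Consider the algorithm A^(2)_{L,c} on two machines with true execution times t₁, t₂ ≥ 0. At any pure Nash equilibrium (t̂₁, t̂₂) with t̂₁ ≤ t̂₂, the smaller declaration satisfies t̂₁ = min(t₁, t̂₂/c) (where t₁ is the true execution time of the machine declaring t̂₁). -/

import Mathlib

/-- Allocation probability of machine 1 in the algorithm `A^(2)_{L,c}`,
given declared execution times `x1`, `x2`. -/
noncomputable def alloc1 (L c x1 x2 : ℝ) : ℝ :=
  if x1 = x2 then 1 / 2
  else if x1 < x2 then (if x2 < c * x1 then 1 / L else 1 - x1 / (L * x2))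
  else 1 - (if x1 < c * x2 then 1 / L else 1 - x2 / (L * x1))

/-- Allocation probability of machine 2 (by symmetry of the algorithm). -/
noncomputable def alloc2 (L c x1 x2 : ℝ) : ℝ := alloc1 L c x2 x1

/-- Expected cost of machine 1 with true time `t1` at declarations `(x1, x2)`,
when machines are bound by their declarations. -/
noncomputable def cost1 (L c t1 x1 x2 : ℝ) : ℝ := alloc1 L c x1 x2 * max x1 t1

/-- Expected cost of machine 2 with true time `t2` at declarations `(x1, x2)`. -/
noncomputable def cost2 (L c t2 x1 x2 : ℝ) : ℝ := alloc2 L c x1 x2 * max x2 t2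

/-- `(b1, b2)` is a pure Nash equilibrium of `A^(2)_{L,c}` for true times `(t1, t2)`:
no machine can strictly decrease her expected cost by a unilateral deviation to
any nonnegative declaration. -/
def IsEquilibrium2 (L c t1 t2 b1 b2 : ℝ) : Prop :=
  (∀ x : ℝ, 0 ≤ x → cost1 L c t1 b1 b2 ≤ cost1 L c t1 x b2) ∧
  (∀ x : ℝ, 0 ≤ x → cost2 L c t2 b1 b2 ≤ cost2 L c t2 b1 x)

lemma alloc1_eq_self (L c x : ℝ) : alloc1 L c x x = 1 / 2 := by
  simp [alloc1]

lemma alloc1_lt_far {L c x1 x2 : ℝ} (h : x1 < x2) (h2 : c * x1 ≤ x2) :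
    alloc1 L c x1 x2 = 1 - x1 / (L * x2) := by
  rw [alloc1, if_neg h.ne, if_pos h, if_neg (not_lt.2 h2)]

lemma alloc1_lt_close {L c x1 x2 : ℝ} (h : x1 < x2) (h2 : x2 < c * x1) :
    alloc1 L c x1 x2 = 1 / L := by
  rw [alloc1, if_neg h.ne, if_pos h, if_pos h2]

lemma alloc1_gt_close {L c x1 x2 : ℝ} (h : x2 < x1) (h2 : x1 < c * x2) :
    alloc1 L c x1 x2 = 1 - 1 / L := by
  rw [alloc1, if_neg h.ne', if_neg (not_lt.2 h.le), if_pos h2]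

lemma alloc1_gt_far {L c x1 x2 : ℝ} (h : x2 < x1) (h2 : c * x2 ≤ x1) :
    alloc1 L c x1 x2 = x2 / (L * x1) := by
  rw [alloc1, if_neg h.ne', if_neg (not_lt.2 h.le), if_neg (not_lt.2 h2)]
  ring

/-- By declaring `max (c*b2) t1`, machine 1 guarantees expected cost `b2 / L`. -/
lemma cost1_big (L c t1 b2 : ℝ) (hL : 0 < L) (hb2 : 0 < b2) (hc : 1 < c) :
    cost1 L c t1 (max (c * b2) t1) b2 = b2 / L := by
  set x0 := max (c * b2) t1 with hx0def
  have h2 : c * b2 ≤ x0 := le_max_left _ _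
  have h1 : b2 < x0 := lt_of_lt_of_le (lt_mul_of_one_lt_left hb2 hc) h2
  have hx0 : 0 < x0 := hb2.trans h1
  rw [cost1, alloc1_gt_far h1 h2, max_eq_left (le_max_right _ _)]
  field_simp
  rw [hx0def, mul_comm]

/-- At any pure Nash equilibrium `(b1, b2)` of `A^(2)_{L,c}` with `b1 ≤ b2`,
the smaller declaration is `b1 = min t1 (b2 / c)`. -/
theorem claim_smallest_bid
    (L c t1 t2 b1 b2 : ℝ)
    (hL : 2 < L) (hc : 1 < c)
    (ht1 : 0 ≤ t1) (ht2 : 0 ≤ t2)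
    (hb1 : 0 ≤ b1) (hb2 : 0 ≤ b2)
    (hord : b1 ≤ b2)
    (heq : IsEquilibrium2 L c t1 t2 b1 b2) :
    b1 = min t1 (b2 / c) := by
  have hL0 : (0:ℝ) < L := by linarith
  have hc0 : (0:ℝ) < c := by linarith
  rcases eq_or_lt_of_le hb2 with hb20 | hb2pos
  · -- b2 = 0 hence b1 = 0
    have hb10 : b1 = 0 := le_antisymm (by linarith [hord, hb20]) hb1
    rw [hb10, ← hb20]
    simp [min_eq_right ht1]
  -- now 0 < b2
  have hbc : b2 / c < b2 := div_lt_self hb2pos hc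
  -- rule out b1 = b2
  rcases eq_or_lt_of_le hord with hbb | hblt
  · exfalso
    have hdev := heq.1 (max (c * b2) t1) (le_max_of_le_right ht1)
    rw [cost1_big L c t1 b2 hL0 hb2pos hc] at hdev
    rw [cost1, hbb, alloc1_eq_self] at hdev
    have hmax : b2 ≤ max b2 t1 := le_max_left _ _
    have h1 : b2 / L < b2 / 2 := by
      apply div_lt_div_of_pos_left hb2pos (by norm_num) hL
    have h2 : b2 / 2 ≤ 1 / 2 * max b2 t1 := by linarith
    linarith
  -- b1 < b2
  rcases lt_trichotomy b1 (min t1 (b2 / c)) with h | h | h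
  · -- b1 too small: deviate to m
    exfalso
    set m := min t1 (b2 / c) with hm
    have hmt : m ≤ t1 := min_le_left _ _
    have hmc : m ≤ b2 / c := min_le_right _ _
    have hmb2 : m < b2 := lt_of_le_of_lt hmc hbc
    have hb1t : b1 < t1 := lt_of_lt_of_le h hmt
    have ht1pos : 0 < t1 := lt_of_le_of_lt hb1 hb1t
    have hm0 : 0 ≤ m := le_min ht1 (le_of_lt (div_pos hb2pos hc0))
    have hcb1 : c * b1 ≤ b2 := by
      have : c * b1 < c * (b2 / c) :=
        mul_lt_mul_of_pos_left (lt_of_lt_of_le h hmc) hc0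
      rw [mul_div_cancel₀ _ (ne_of_gt hc0)] at this
      linarith
    have hcm : c * m ≤ b2 := by
      have : c * m ≤ c * (b2 / c) := mul_le_mul_of_nonneg_left hmc hc0.le
      rwa [mul_div_cancel₀ _ (ne_of_gt hc0)] at this
    have hdev := heq.1 m hm0
    rw [cost1, cost1, alloc1_lt_far hblt hcb1, alloc1_lt_far hmb2 hcm,
      max_eq_right hb1t.le, max_eq_right hmt] at hdev
    have hK : 0 < L * b2 := mul_pos hL0 hb2pos
    have hdd : b1 / (L * b2) < m / (L * b2) := by gcongr
    have key : (1 - m / (L * b2)) * t1 < (1 - b1 / (L * b2)) * t1 :=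
      mul_lt_mul_of_pos_right (by linarith) ht1pos
    linarith
  · exact h
  · -- b1 too large
    exfalso
    by_cases htc : t1 ≤ b2 / c
    · -- m = t1
      have hmt : min t1 (b2 / c) = t1 := min_eq_left htc
      rw [hmt] at h
      by_cases hb1c : b1 ≤ b2 / c
      · -- both in far region: deviate to t1
        have hcb1 : c * b1 ≤ b2 := by
          have := mul_le_mul_of_nonneg_left hb1c hc0.le
          rwa [mul_div_cancel₀ _ (ne_of_gt hc0)] at this
        have hct1 : c * t1 ≤ b2 := by
          have := mul_le_mul_of_nonneg_left htc hc0.le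
          rwa [mul_div_cancel₀ _ (ne_of_gt hc0)] at this
        have hdev := heq.1 t1 ht1
        rw [cost1, cost1, alloc1_lt_far hblt hcb1,
          alloc1_lt_far (lt_of_le_of_lt htc hbc) hct1,
          max_eq_left h.le, max_self] at hdev
        have hK : 0 < L * b2 := mul_pos hL0 hb2pos
        have hsum : b1 + t1 < L * b2 := by nlinarith
        have key : (1 - t1 / (L * b2)) * t1 < (1 - b1 / (L * b2)) * b1 := by
          have e1 : (1 - t1 / (L * b2)) * t1 = (L * b2 - t1) * t1 / (L * b2) := by
            field_simp
          have e2 : (1 - b1 / (L * b2)) * b1 = (L * b2 - b1) * b1 / (L * b2) := by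
            field_simp
          rw [e1, e2, div_lt_div_iff₀ hK hK]
          nlinarith [mul_pos (sub_pos.2 h) (sub_pos.2 hsum)]
        linarith
      · -- b2/c < b1 < b2: deviate to midpoint
        push_neg at hb1c
        set x := (b2 / c + b1) / 2 with hx
        have hx1 : b2 / c < x := by linarith
        have hx2 : x < b1 := by linarith
        have hx0 : 0 ≤ x := le_trans (le_of_lt (div_pos hb2pos hc0)) hx1.le
        have hcx : b2 < c * x := by
          have : c * (b2 / c) < c * x := mul_lt_mul_of_pos_left hx1 hc0
          rwa [mul_div_cancel₀ _ (ne_of_gt hc0)] at this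
        have hcb1 : b2 < c * b1 := lt_trans hcx (mul_lt_mul_of_pos_left hx2 hc0)
        have ht1x : t1 < x := lt_of_le_of_lt htc hx1
        have hdev := heq.1 x hx0
        rw [cost1, cost1, alloc1_lt_close hblt hcb1,
          alloc1_lt_close (lt_trans hx2 hblt) hcx,
          max_eq_left h.le, max_eq_left ht1x.le] at hdev
        have : 0 < 1 / L := by positivity
        nlinarith
    · -- m = b2/c < t1, b2/c < b1 < b2: machine 2 deviates
      push_neg at htc
      have hmt : min t1 (b2 / c) = b2 / c := min_eq_right htc.le
      rw [hmt] at h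
      have hb1pos : 0 < b1 := lt_trans (div_pos hb2pos hc0) h
      have hcb1 : b2 < c * b1 := by
        have : c * (b2 / c) < c * b1 := mul_lt_mul_of_pos_left h hc0
        rwa [mul_div_cancel₀ _ (ne_of_gt hc0)] at this
      set y := max (c * b1) t2 with hy
      have hy2 : c * b1 ≤ y := le_max_left _ _
      have hy1 : b1 < y := lt_of_lt_of_le (lt_mul_of_one_lt_left hb1pos hc) hy2
      have hypos : 0 < y := hb1pos.trans hy1
      have hdev := heq.2 y (le_max_of_le_right ht2)
      rw [cost2, cost2, alloc2, alloc2, alloc1_gt_close hblt hcb1,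
        alloc1_gt_far hy1 hy2, max_eq_left (le_max_right _ _)] at hdev
      have hyval : b1 / (L * y) * y = b1 / L := by
        field_simp
      rw [hyval] at hdev
      have hmax : b2 ≤ max b2 t2 := le_max_left _ _
      have hmax2 : 0 < max b2 t2 := lt_of_lt_of_le hb2pos hmax
      have h1L : (0:ℝ) < 1 / L := by positivity
      have h2L : (2:ℝ) / L < 1 := (div_lt_one hL0).2 hL
      have hA : (1:ℝ) / L < 1 - 1 / L := by
        have : (1:ℝ) / L + 1 / L = 2 / L := by ring
        linarith
      have hB : b1 * (1 / L) < b2 * (1 / L) := mul_lt_mul_of_pos_right hblt h1L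
      have hC : b2 * (1 / L) ≤ max b2 t2 * (1 / L) := mul_le_mul_of_nonneg_right hmax h1L.le
      have hD : max b2 t2 * (1 / L) < max b2 t2 * (1 - 1 / L) :=
        mul_lt_mul_of_pos_left hA hmax2
      have e : b1 / L = b1 * (1 / L) := (mul_one_div b1 L).symm
      linarith
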